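/- For every complex number s with Re(s) > 3, Σ_{k=0}^{∞} (k+1)(k+2)(k+3/2)^{−s} + Σ_{k=0}^{∞} k(k+1)(k+1/2)^{−s} = 2(2^{s−2} − 1)·ζ(s−2) − (1/2)(2^{s} − 1)·ζ(s). (The left-hand side is the spectral zeta function ζ_D(s) = Tr|D|^{−s} of the Dirac operator D of the SU_q(2) spectral triple, whose eigenvalues are 2j+3/2 with multiplicity (2j+1)(2j+2) and −(2j+1/2) with multiplicity 2j(2j+1), for 2j ∈ ℕ.) -/

import Mathlib

open Complex

lemma hasSum_half (σ : ℂ) (hσ : 1 < σ.re) :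
    HasSum (fun k : ℕ => (((k : ℝ) + 1 / 2 : ℝ) : ℂ) ^ (-σ))
      (((2 : ℂ) ^ σ - 1) * riemannZeta σ) := by
  have h2 : (2 : ℂ) ^ σ ≠ 0 := by
    rw [Complex.cpow_def_of_ne_zero two_ne_zero]; exact Complex.exp_ne_zero _
  set f : ℕ → ℂ := fun n => 1 / (n : ℂ) ^ σ with hf
  have hsum : Summable f := Complex.summable_one_div_nat_cpow.mpr hσ
  have hzeta : HasSum f (riemannZeta σ) := by
    rw [zeta_eq_tsum_one_div_nat_cpow hσ]; exact hsum.hasSum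
  have heven : HasSum (fun k : ℕ => f (2 * k))
      (((2 : ℂ) ^ σ)⁻¹ * riemannZeta σ) := by
    refine (hzeta.mul_left (((2 : ℂ) ^ σ)⁻¹)).congr_fun fun k => ?_
    simp only [hf]
    rw [Nat.cast_mul, natCast_mul_natCast_cpow, Nat.cast_ofNat]
    field_simp
  have hodd_summable : Summable (fun k : ℕ => f (2 * k + 1)) :=
    hsum.comp_injective fun a b hab => by omega
  obtain ⟨T, hT⟩ := hodd_summable
  have hsplit : HasSum f (((2 : ℂ) ^ σ)⁻¹ * riemannZeta σ + T) := heven.even_add_odd hT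
  have hTval : T = riemannZeta σ - ((2 : ℂ) ^ σ)⁻¹ * riemannZeta σ := by
    have := hsplit.unique hzeta
    linear_combination this
  have key : ∀ k : ℕ, (((k : ℝ) + 1 / 2 : ℝ) : ℂ) ^ (-σ)
      = (2 : ℂ) ^ σ * f (2 * k + 1) := by
    intro k
    have h1 : ((2 * k + 1 : ℕ) : ℂ) ^ σ
        = (2 : ℂ) ^ σ * (((k : ℝ) + 1 / 2 : ℝ) : ℂ) ^ σ := by
      have hm := mul_cpow_ofReal_nonneg (by norm_num : (0:ℝ) ≤ 2)
        (by positivity : (0:ℝ) ≤ (k : ℝ) + 1/2) σ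
      rw [show ((2 * k + 1 : ℕ) : ℂ) = ((2 : ℝ) : ℂ) * (((k : ℝ) + 1 / 2 : ℝ) : ℂ) by
          push_cast; ring, hm]
      norm_num
    have hb : (((k : ℝ) + 1 / 2 : ℝ) : ℂ) ^ σ ≠ 0 := by
      intro h
      rw [Complex.cpow_def_of_ne_zero (by simp only [ne_eq, ofReal_eq_zero]; positivity)] at h
      exact Complex.exp_ne_zero _ h
    simp only [hf]
    rw [cpow_neg, h1]
    field_simp
  have final : HasSum (fun k : ℕ => (((k : ℝ) + 1 / 2 : ℝ) : ℂ) ^ (-σ))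
      ((2 : ℂ) ^ σ * T) := (hT.mul_left ((2 : ℂ) ^ σ)).congr_fun key
  rw [hTval] at final
  convert final using 1
  field_simp


/-- for `Re s > 3`, the spectral zeta function of the Dirac operator of the
`SU_q(2)` spectral triple satisfies
`Σ (k+1)(k+2)(k+3/2)^(-s) + Σ k(k+1)(k+1/2)^(-s) = 2(2^(s-2)-1)ζ(s-2) - (1/2)(2^s-1)ζ(s)`. -/
theorem suq2_zeta_function_formula (s : ℂ) (hs : 3 < s.re) :
    (∑' k : ℕ, ((k : ℂ) + 1) * ((k : ℂ) + 2) * (((k : ℝ) + 3 / 2 : ℝ) : ℂ) ^ (-s))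
      + (∑' k : ℕ, (k : ℂ) * ((k : ℂ) + 1) * (((k : ℝ) + 1 / 2 : ℝ) : ℂ) ^ (-s))
    = 2 * ((2 : ℂ) ^ (s - 2) - 1) * riemannZeta (s - 2)
      - (1 / 2) * ((2 : ℂ) ^ s - 1) * riemannZeta s := by
  have hs1 : 1 < s.re := by linarith
  have hs2 : 1 < (s - 2).re := by
    rw [Complex.sub_re]; norm_num; linarith
  have A1 := hasSum_half (s - 2) hs2
  have A2 := hasSum_half s hs1
  set g : ℕ → ℂ := fun k => (k : ℂ) * ((k : ℂ) + 1) * (((k : ℝ) + 1 / 2 : ℝ) : ℂ) ^ (-s)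
    with hgdef
  set T : ℂ := ((2 : ℂ) ^ (s - 2) - 1) * riemannZeta (s - 2)
    - (1 / 4) * (((2 : ℂ) ^ s - 1) * riemannZeta s) with hTdef
  have hg : HasSum g T := by
    refine (A1.sub (A2.mul_left (1 / 4))).congr_fun fun k => ?_
    simp only [hgdef]
    have ha : (((k : ℝ) + 1 / 2 : ℝ) : ℂ) ≠ 0 := by
      simp only [ne_eq, ofReal_eq_zero]; positivity
    have h2 : (((k : ℝ) + 1 / 2 : ℝ) : ℂ) ^ (-(s - 2))
        = (((k : ℝ) + 1 / 2 : ℝ) : ℂ) ^ 2 * (((k : ℝ) + 1 / 2 : ℝ) : ℂ) ^ (-s) := by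
      rw [show -(s - 2) = ((2 : ℕ) : ℂ) + (-s) by push_cast; ring, cpow_add _ _ ha,
        cpow_natCast]
    rw [h2]
    push_cast
    ring
  have hf : HasSum (fun k : ℕ =>
      ((k : ℂ) + 1) * ((k : ℂ) + 2) * (((k : ℝ) + 3 / 2 : ℝ) : ℂ) ^ (-s)) T := by
    have h0 : HasSum (fun n : ℕ => g (n + 1)) T := by
      refine (hasSum_nat_add_iff 1).mpr ?_
      convert hg using 1
      · rfl
      simp [hgdef]
    refine h0.congr_fun fun k => ?_
    simp only [hgdef]
    have hb : (((k + 1 : ℕ) : ℝ) + 1 / 2 : ℝ) = ((k : ℝ) + 3 / 2 : ℝ) := by push_cast; ring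
    rw [hb]
    push_cast
    ring
  rw [hf.tsum_eq, hg.tsum_eq, hTdef]
  ring
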